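/- Let (c₁,B₁),…,(cₘ,Bₘ) be a Brascamp–Lieb datum on ℝⁿ. Suppose the positive definite n×n matrix A is a maximizer of the function F(M) = log det(M) − Σᵢ cᵢ log det(Bᵢ M Bᵢ*) over all positive definite n×n matrices M (equivalently, A is extremal in the inequality det(M) ≤ C_g² ∏ᵢ det(Bᵢ M Bᵢ*)^{cᵢ}). Then A satisfies A⁻¹ = Σᵢ cᵢ Bᵢ* (Bᵢ A Bᵢ*)⁻¹ Bᵢ. -/

import Mathlib

open Matrix

section Aux

variable {p q : Type*} [Fintype p] [Fintype q] [DecidableEq p] [DecidableEq q]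

private lemma posDef_mul_mul_transpose
    {A : Matrix q q ℝ} (hA : A.PosDef) (M : Matrix p q ℝ)
    (hM : ∀ x : p → ℝ, x ᵥ* M = 0 → x = 0) : (M * A * Mᵀ).PosDef := by
  have hAt : Aᵀ = A := by
    rw [← conjTranspose_eq_transpose_of_trivial]; exact hA.isHermitian.eq
  refine posDef_iff_dotProduct_mulVec.mpr ⟨?_, ?_⟩
  · show (M * A * Mᵀ)ᴴ = _
    simp only [conjTranspose_eq_transpose_of_trivial, transpose_mul, transpose_transpose,
      hAt, Matrix.mul_assoc]
  · intro x hx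
    have hy : x ᵥ* M ≠ 0 := fun h => hx (hM x h)
    have h2 := hA.dotProduct_mulVec_pos hy
    have hrw : star x ⬝ᵥ (M * A * Mᵀ) *ᵥ x = star (x ᵥ* M) ⬝ᵥ A *ᵥ (x ᵥ* M) := by
      rw [star_trivial, star_trivial, ← Matrix.mulVec_mulVec, ← Matrix.mulVec_mulVec,
        Matrix.dotProduct_mulVec, Matrix.mulVec_transpose]
    rwa [hrw]

private lemma posDef_one_add_smul {M : Matrix q q ℝ} (hM : Mᵀ = M) {t : ℝ}
    (ht : |t| * (∑ i, ∑ j, |M i j|) < 1) : ((1 : Matrix q q ℝ) + t • M).PosDef := by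
  refine posDef_iff_dotProduct_mulVec.mpr ⟨?_, ?_⟩
  · show ((1 : Matrix q q ℝ) + t • M)ᴴ = _
    rw [conjTranspose_eq_transpose_of_trivial, transpose_add, transpose_one, transpose_smul, hM]
  · intro x hx
    have hS : (0:ℝ) < ∑ i, x i ^ 2 := by
      obtain ⟨i, hi⟩ := Function.ne_iff.mp hx
      exact Finset.sum_pos' (fun j _ => sq_nonneg _) ⟨i, Finset.mem_univ i, lt_of_le_of_ne (sq_nonneg _) (Ne.symm (pow_ne_zero 2 hi))⟩
    have hxx : star x ⬝ᵥ ((1 : Matrix q q ℝ) + t • M) *ᵥ x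
        = (∑ i, x i ^ 2) + t * (x ⬝ᵥ M *ᵥ x) := by
      rw [star_trivial, add_mulVec, dotProduct_add, one_mulVec, smul_mulVec,
        dotProduct_smul, smul_eq_mul]
      congr 1
      simp [dotProduct, sq]
    have hbound : |x ⬝ᵥ M *ᵥ x| ≤ (∑ i, ∑ j, |M i j|) * (∑ i, x i ^ 2) := by
      have h1 : x ⬝ᵥ M *ᵥ x = ∑ i, ∑ j, x i * (M i j * x j) := by
        simp [dotProduct, Matrix.mulVec, Finset.mul_sum]
      rw [h1, Finset.sum_mul]
      refine (Finset.abs_sum_le_sum_abs _ _).trans (Finset.sum_le_sum fun i _ => ?_)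
      rw [Finset.sum_mul]
      refine (Finset.abs_sum_le_sum_abs _ _).trans (Finset.sum_le_sum fun j _ => ?_)
      have hxi : x i ^ 2 ≤ ∑ k, x k ^ 2 :=
        Finset.single_le_sum (fun k _ => sq_nonneg (x k)) (Finset.mem_univ i)
      have hxj : x j ^ 2 ≤ ∑ k, x k ^ 2 :=
        Finset.single_le_sum (fun k _ => sq_nonneg (x k)) (Finset.mem_univ j)
      have : |x i * (M i j * x j)| = |M i j| * (|x i| * |x j|) := by
        rw [abs_mul, abs_mul]; ring
      rw [this]
      have hij : |x i| * |x j| ≤ ∑ k, x k ^ 2 := by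
        nlinarith [abs_nonneg (x i), abs_nonneg (x j), sq_abs (x i), sq_abs (x j)]
      exact mul_le_mul_of_nonneg_left hij (abs_nonneg _)
    rw [hxx]
    have habs : |t * (x ⬝ᵥ M *ᵥ x)| ≤ |t| * ((∑ i, ∑ j, |M i j|) * (∑ i, x i ^ 2)) := by
      rw [abs_mul]
      exact mul_le_mul_of_nonneg_left hbound (abs_nonneg _)
    nlinarith [neg_abs_le (t * (x ⬝ᵥ M *ᵥ x)), abs_nonneg t]

private lemma hasDerivAt_log_det (S K : Matrix q q ℝ) (hS : S.PosDef) :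
    HasDerivAt (fun t : ℝ => Real.log (S + t • K).det) ((S⁻¹ * K).trace) 0 := by
  have hdet : S.det ≠ 0 := hS.det_pos.ne'
  have hu : IsUnit S.det := isUnit_iff_ne_zero.mpr hdet
  set M := S⁻¹ * K with hMdef
  have key : ∀ t : ℝ, S + t • K = S * (1 + t • M) := by
    intro t
    rw [mul_add, mul_one, Matrix.mul_smul, hMdef, ← mul_assoc,
      Matrix.mul_nonsing_inv _ hu, one_mul]
  set P : Polynomial ℝ := (Matrix.det (1 + (Polynomial.X : Polynomial ℝ) • M.map Polynomial.C)).divX.divX with hP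
  have hp : HasDerivAt (fun t : ℝ => (1 + t • M).det) M.trace 0 := by
    have hpoly : HasDerivAt (fun t : ℝ => 1 + M.trace * t + P.eval t * t ^ 2) M.trace 0 := by
      have h1 : HasDerivAt (fun t : ℝ => 1 + M.trace * t) M.trace 0 := by
        simpa using ((hasDerivAt_id (0:ℝ)).const_mul M.trace).const_add 1
      have h2 : HasDerivAt (fun t : ℝ => P.eval t * t ^ 2) 0 0 := by
        exact ((P.hasDerivAt 0).mul (hasDerivAt_pow 2 0)).congr_deriv (by simp)
      exact (h1.add h2).congr_deriv (by simp)
    exact hpoly.congr_of_eventuallyEq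
      (Filter.Eventually.of_forall fun t => Matrix.det_one_add_smul t M)
  have hg : HasDerivAt (fun t : ℝ => (S + t • K).det) (S.det * M.trace) 0 := by
    refine HasDerivAt.congr_of_eventuallyEq (hp.const_mul S.det)
      (Filter.Eventually.of_forall fun t => ?_)
    simp only [key, det_mul]
  have hlog := hg.log (by simpa using hdet)
  have : S.det * M.trace / (S + (0:ℝ) • K).det = M.trace := by
    simp only [zero_smul, add_zero]
    rw [mul_comm, mul_div_assoc, div_self hdet, mul_one]
  rwa [this] at hlog

private lemma eq_zero_of_trace_mul_self {D : Matrix q q ℝ} (hD : Dᵀ = D)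
    (h : (D * D).trace = 0) : D = 0 := by
  have hsym : ∀ i j, D j i = D i j := fun i j => by
    conv_lhs => rw [← hD, transpose_apply]
  have h2 : ∑ i, ∑ j, D i j ^ 2 = 0 := by
    rw [← h]
    simp only [Matrix.trace, Matrix.diag, Matrix.mul_apply]
    exact Finset.sum_congr rfl fun i _ => Finset.sum_congr rfl fun j _ => by
      rw [hsym i j, sq]
  ext i j
  have hin := (Finset.sum_eq_zero_iff_of_nonneg
    (fun i _ => Finset.sum_nonneg fun j _ => sq_nonneg (D i j))).mp h2 i (Finset.mem_univ i)
  have := (Finset.sum_eq_zero_iff_of_nonneg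
    (fun j _ => sq_nonneg (D i j))).mp hin j (Finset.mem_univ j)
  simpa using sq_eq_zero_iff.mp this

end Aux

/-- **Extremizers satisfy the structural equation** (Lemma 7 of the paper).
If the positive definite matrix `A` maximizes
`M ↦ log det(M) − ∑ cᵢ log det(Bᵢ M Bᵢ*)` over positive definite matrices `M`,
then `A⁻¹ = ∑ cᵢ Bᵢ* (Bᵢ A Bᵢ*)⁻¹ Bᵢ`. -/
theorem extremizer_satisfies_john_equation
    (m n : ℕ) (ni : Fin m → ℕ) (c : Fin m → ℝ) (hc : ∀ i, 0 < c i)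
    (B : ∀ i, Matrix (Fin (ni i)) (Fin n) ℝ)
    (hB : ∀ i, Function.Surjective (B i).mulVec)
    (A : Matrix (Fin n) (Fin n) ℝ) (hA : A.PosDef)
    (hmax : ∀ M : Matrix (Fin n) (Fin n) ℝ, M.PosDef →
      Real.log M.det - ∑ i, c i * Real.log ((B i * M * (B i)ᵀ).det) ≤
        Real.log A.det - ∑ i, c i * Real.log ((B i * A * (B i)ᵀ).det)) :
    A⁻¹ = ∑ i, c i • ((B i)ᵀ * (B i * A * (B i)ᵀ)⁻¹ * B i) := by
  classical
  set S : ∀ i, Matrix (Fin (ni i)) (Fin (ni i)) ℝ := fun i => B i * A * (B i)ᵀ with hSdef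
  have hvecMul : ∀ i, ∀ x : Fin (ni i) → ℝ, x ᵥ* B i = 0 → x = 0 := by
    intro i x hx
    obtain ⟨N, hN⟩ := Matrix.mulVec_surjective_iff_exists_right_inverse.mp (hB i)
    have hxN : x ᵥ* (B i * N) = 0 := by
      rw [← Matrix.vecMul_vecMul, hx, Matrix.zero_vecMul]
    rwa [hN, Matrix.vecMul_one] at hxN
  have hS : ∀ i, (S i).PosDef := fun i => posDef_mul_mul_transpose hA (B i) (hvecMul i)
  set G : Matrix (Fin n) (Fin n) ℝ := ∑ i, c i • ((B i)ᵀ * (S i)⁻¹ * B i) with hG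
  set D : Matrix (Fin n) (Fin n) ℝ := A⁻¹ - G with hDdef
  have hAt : Aᵀ = A := by
    rw [← conjTranspose_eq_transpose_of_trivial]; exact hA.isHermitian.eq
  have hSt : ∀ i, (S i)ᵀ = S i := fun i => by
    rw [← conjTranspose_eq_transpose_of_trivial]; exact (hS i).isHermitian.eq
  have hDt : Dᵀ = D := by
    rw [hDdef, hG]
    simp only [transpose_sub, transpose_nonsing_inv, hAt, Matrix.transpose_sum,
      transpose_smul, transpose_mul, transpose_transpose, hSt, Matrix.mul_assoc]
  -- the perturbed datum
  have hSK : ∀ i, ∀ t : ℝ, B i * (A + t • D) * (B i)ᵀ = S i + t • (B i * D * (B i)ᵀ) := by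
    intro i t
    simp only [hSdef, Matrix.mul_add, Matrix.add_mul, Matrix.mul_smul, Matrix.smul_mul]
  set f : ℝ → ℝ := fun t =>
    Real.log (A + t • D).det - ∑ i, c i * Real.log ((S i + t • (B i * D * (B i)ᵀ)).det) with hf
  have hderiv : HasDerivAt f
      ((A⁻¹ * D).trace - ∑ i, c i * (((S i)⁻¹ * (B i * D * (B i)ᵀ)).trace)) 0 :=
    (hasDerivAt_log_det A D hA).sub
      (HasDerivAt.fun_sum fun i _ => (hasDerivAt_log_det _ _ (hS i)).const_mul (c i))
  -- sqrt decomposition for small perturbations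
  obtain ⟨R, hRt, hRdet, hRR⟩ : ∃ R : Matrix (Fin n) (Fin n) ℝ,
      Rᵀ = R ∧ R.det ≠ 0 ∧ R * R = A := by
    open scoped MatrixOrder in
    refine ⟨CFC.sqrt A, ?_, ?_, CFC.sqrt_mul_sqrt_self A hA.posSemidef.nonneg⟩
    · rw [← conjTranspose_eq_transpose_of_trivial]
      open scoped MatrixOrder in
      exact (CFC.sqrt_nonneg A).posSemidef.isHermitian.eq
    · intro h
      open scoped MatrixOrder in
      have := CFC.sqrt_mul_sqrt_self A hA.posSemidef.nonneg
      have hdet : A.det = 0 := by rw [← this, det_mul, h, mul_zero]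
      exact hA.det_pos.ne' hdet
  have hRu : IsUnit R.det := isUnit_iff_ne_zero.mpr hRdet
  set M : Matrix (Fin n) (Fin n) ℝ := R⁻¹ * D * R⁻¹ with hMdef
  have hMt : Mᵀ = M := by
    rw [hMdef, transpose_mul, transpose_mul, transpose_nonsing_inv, hRt, hDt, mul_assoc]
  have hRMR : R * M * R = D := by
    have hassoc : R * (R⁻¹ * D * R⁻¹) * R = (R * R⁻¹) * D * (R⁻¹ * R) := by
      simp only [mul_assoc]
    rw [hMdef, hassoc, Matrix.mul_nonsing_inv _ hRu, Matrix.nonsing_inv_mul _ hRu,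
      one_mul, mul_one]
  have hdecomp : ∀ t : ℝ, A + t • D = R * (1 + t • M) * R := by
    intro t
    rw [mul_add, mul_one, add_mul, Matrix.mul_smul, Matrix.smul_mul, hRR, hRMR]
  have hRvec : ∀ x : Fin n → ℝ, x ᵥ* R = 0 → x = 0 := by
    intro x hx
    have : (x ᵥ* R) ᵥ* R⁻¹ = x := by
      rw [Matrix.vecMul_vecMul, Matrix.mul_nonsing_inv _ hRu, Matrix.vecMul_one]
    rw [hx, Matrix.zero_vecMul] at this
    exact this.symm
  -- eventually positive definite
  have hev : ∀ᶠ t : ℝ in nhds 0, (A + t • D).PosDef := by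
    set Cst : ℝ := ∑ i, ∑ j, |M i j| with hCst
    have hC0 : (0:ℝ) ≤ Cst :=
      Finset.sum_nonneg fun i _ => Finset.sum_nonneg fun j _ => abs_nonneg _
    rw [Metric.eventually_nhds_iff]
    refine ⟨(Cst + 1)⁻¹, by positivity, fun {t} ht => ?_⟩
    rw [Real.dist_eq, sub_zero] at ht
    have h't : |t| * Cst < 1 := by
      calc |t| * Cst ≤ |t| * (Cst + 1) := by nlinarith [abs_nonneg t]
        _ < (Cst + 1)⁻¹ * (Cst + 1) := by
            exact mul_lt_mul_of_pos_right ht (by positivity)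
        _ = 1 := by field_simp
    rw [hdecomp t]
    have := posDef_mul_mul_transpose (posDef_one_add_smul hMt h't) R hRvec
    rwa [hRt] at this
  -- local maximum
  have hloc : IsLocalMax f 0 := by
    filter_upwards [hev] with t hPD
    have hmx := hmax (A + t • D) hPD
    simp only [hSK] at hmx
    simpa [hf] using hmx
  have hzero := hloc.hasDerivAt_eq_zero hderiv
  -- rewrite traces
  have htr : ∀ i, ((S i)⁻¹ * (B i * D * (B i)ᵀ)).trace
      = (((B i)ᵀ * (S i)⁻¹ * B i) * D).trace := by
    intro i
    rw [show (S i)⁻¹ * (B i * D * (B i)ᵀ) = ((S i)⁻¹ * (B i * D)) * (B i)ᵀ by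
      simp only [Matrix.mul_assoc]]
    rw [Matrix.trace_mul_comm]
    simp only [Matrix.mul_assoc]
  have hGD : (G * D).trace = ∑ i, c i * (((S i)⁻¹ * (B i * D * (B i)ᵀ)).trace) := by
    rw [hG, Finset.sum_mul]
    rw [Matrix.trace_sum]
    refine Finset.sum_congr rfl fun i _ => ?_
    rw [Matrix.smul_mul, Matrix.trace_smul, smul_eq_mul, htr i]
  have htrDD : (D * D).trace = 0 := by
    have : (D * D).trace = (A⁻¹ * D).trace - (G * D).trace := by
      nth_rewrite 1 [hDdef]
      rw [Matrix.sub_mul, Matrix.trace_sub]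
    rw [this, hGD]
    exact hzero
  have hD0 : D = 0 := eq_zero_of_trace_mul_self hDt htrDD
  rw [hDdef] at hD0
  exact sub_eq_zero.mp hD0
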